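/- Fix s ≥ 1, P_s = {a_1,…,a_s, c | a_i < c}. For 0 ≤ p ≤ m, 0 ≤ q ≤ n, the number of words of length n with exactly q letters c and n−q letters from {a_1,…,a_s} lying above a fixed word p_1⋯p_m (having exactly p letters c) in the generalized subword order depends only on (m, p, n, q), not on the choice of the word p_1⋯p_m. -/

import Mathlib

/-- The alphabet `P_s = {a_1, …, a_s, c}` with `a_i < c`: `some i` is `a_i`, `none` is `c`. -/
abbrev Letter (s : ℕ) := Option (Fin s)

/-- The generalized subword order on words over `P_s`. -/
def WLE {s : ℕ} (u w : List (Letter s)) : Prop :=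
  ∃ w', w'.Sublist w ∧ List.Forall₂ (fun x y => x = y ∨ y = none) u w'

namespace CAWD

variable {s : ℕ}

def wleB : List (Letter s) → List (Letter s) → Bool
  | [], _ => true
  | _ :: _, [] => false
  | x :: u, y :: w => if x = y ∨ y = none then wleB u w else wleB (x :: u) w

theorem wleB_nil (w : List (Letter s)) : wleB [] w = true := by cases w <;> rfl

theorem wleB_cons_nil (x : Letter s) (u : List (Letter s)) : wleB (x :: u) [] = false := rfl

theorem wleB_cons_cons (x y : Letter s) (u w : List (Letter s)) :
    wleB (x :: u) (y :: w) = if x = y ∨ y = none then wleB u w else wleB (x :: u) w := by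
  rw [wleB]

theorem wle_nil (w : List (Letter s)) : WLE [] w := ⟨[], List.nil_sublist _, List.Forall₂.nil⟩

theorem not_wle_cons_nil (x : Letter s) (u : List (Letter s)) : ¬ WLE (x :: u) [] := by
  rintro ⟨w', hs, hf⟩
  cases List.sublist_nil.mp hs
  cases hf

theorem wle_of_cons {x : Letter s} {u w : List (Letter s)} (h : WLE (x :: u) w) : WLE u w := by
  obtain ⟨w', hs, hf⟩ := h
  cases hf with
  | cons hxy hf' => exact ⟨_, (List.sublist_cons_self _ _).trans hs, hf'⟩

theorem wle_cons_iff {x y : Letter s} {u w : List (Letter s)} :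
    WLE (x :: u) (y :: w) ↔ ((x = y ∨ y = none) ∧ WLE u w) ∨ WLE (x :: u) w := by
  constructor
  · rintro ⟨w', hs, hf⟩
    cases hs with
    | cons _ h => exact Or.inr ⟨w', h, hf⟩
    | cons_cons _ h =>
        cases hf with
        | cons hxy hf' => exact Or.inl ⟨hxy, _, h, hf'⟩
  · rintro (⟨hxy, w', hs, hf⟩ | ⟨w', hs, hf⟩)
    · exact ⟨y :: w', hs.cons_cons _, hf.cons hxy⟩
    · exact ⟨w', hs.cons _, hf⟩

theorem wle_iff_wleB (u w : List (Letter s)) : WLE u w ↔ wleB u w = true := by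
  induction u, w using wleB.induct with
  | case1 w => simpa [wleB_nil] using wle_nil w
  | case2 x u => simp [wleB_cons_nil, not_wle_cons_nil]
  | case3 x u y w h ih =>
      rw [wleB_cons_cons, if_pos h, ← ih, wle_cons_iff]
      constructor
      · rintro (⟨_, h⟩ | h)
        · exact h
        · exact wle_of_cons h
      · exact fun hw => Or.inl ⟨h, hw⟩
  | case4 x u y w h ih =>
      rw [wleB_cons_cons, if_neg h, ← ih, wle_cons_iff]
      simp [h]

/-- The conjectured common count, defined by a recursion on `n` that peels off the first
letter of the counted word `w`. -/
def g (s : ℕ) : ℕ → ℕ → ℕ → ℕ → ℕ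
  | 0, _, 0, 0 => 1
  | 0, _, 0, _ + 1 => 0
  | _ + 1, _, 0, _ => 0
  | 0, p, n + 1, 0 => s * g s 0 p n 0
  | 0, p, n + 1, q + 1 => g s 0 p n q + s * g s 0 p n (q + 1)
  | m + 1, 0, n + 1, 0 => g s m 0 n 0 + (s - 1) * g s (m + 1) 0 n 0
  | m + 1, 0, n + 1, q + 1 =>
      g s m 0 n q + g s m 0 n (q + 1) + (s - 1) * g s (m + 1) 0 n (q + 1)
  | m + 1, p + 1, n + 1, 0 => s * g s (m + 1) (p + 1) n 0
  | m + 1, p + 1, n + 1, q + 1 => g s m p n q + s * g s (m + 1) (p + 1) n (q + 1)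

theorem g_zero_succ (s m p q : ℕ) : g s (m + 1) p 0 q = 0 := by simp [g]
theorem g_nil0 (s p n : ℕ) : g s 0 p (n + 1) 0 = s * g s 0 p n 0 := by rw [g]
theorem g_nilq (s p n q : ℕ) :
    g s 0 p (n + 1) (q + 1) = g s 0 p n q + s * g s 0 p n (q + 1) := by rw [g]
theorem g_a0 (s m n : ℕ) :
    g s (m + 1) 0 (n + 1) 0 = g s m 0 n 0 + (s - 1) * g s (m + 1) 0 n 0 := by rw [g]
theorem g_aq (s m n q : ℕ) :
    g s (m + 1) 0 (n + 1) (q + 1)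
      = g s m 0 n q + g s m 0 n (q + 1) + (s - 1) * g s (m + 1) 0 n (q + 1) := by rw [g]
theorem g_c0 (s m p n : ℕ) :
    g s (m + 1) (p + 1) (n + 1) 0 = s * g s (m + 1) (p + 1) n 0 := by rw [g]
theorem g_cq (s m p n q : ℕ) :
    g s (m + 1) (p + 1) (n + 1) (q + 1)
      = g s m p n q + s * g s (m + 1) (p + 1) n (q + 1) := by rw [g]

theorem sub_one_mul_add (s : ℕ) (hs : 1 ≤ s) (x : ℕ) : (s - 1) * x + x = s * x := by
  rw [← Nat.succ_mul]; congr 1; omega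

/-- The key exchange identity for `g`. -/
theorem gstar (s : ℕ) (hs : 1 ≤ s) (n : ℕ) : ∀ M P, P ≤ M →
    (g s (M + 1 + 1) (P + 1) n 0 = g s (M + 1) (P + 1) n 0) ∧
    (∀ Q, g s (M + 1) P n Q + g s (M + 1 + 1) (P + 1) n (Q + 1)
        = g s (M + 1) (P + 1) n Q + g s (M + 1) (P + 1) n (Q + 1)) := by
  induction n with
  | zero => intro M P _; simp [g_zero_succ]
  | succ n ih =>
      intro M P hPM
      constructor
      · rw [g_c0, g_c0, (ih M P hPM).1]
      · intro Q
        match P, hPM, Q with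
        | 0, hPM, 0 =>
            rw [g_a0, g_cq, g_c0, g_cq]
            have h1 := (ih M 0 (Nat.zero_le _)).2 0
            have h1' : s * (g s (M + 1) 0 n 0 + g s (M + 1 + 1) 1 n (0 + 1))
                = s * (g s (M + 1) 1 n 0 + g s (M + 1) 1 n (0 + 1)) := by rw [h1]
            have hsub := sub_one_mul_add s hs (g s (M + 1) 0 n 0)
            linarith [h1', hsub]
        | 0, hPM, Q + 1 =>
            rw [g_aq, g_cq, g_cq, g_cq]
            have h1 := (ih M 0 (Nat.zero_le _)).2 (Q + 1)
            have h1' : s * (g s (M + 1) 0 n (Q + 1) + g s (M + 1 + 1) 1 n (Q + 1 + 1))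
                = s * (g s (M + 1) 1 n (Q + 1) + g s (M + 1) 1 n (Q + 1 + 1)) := by rw [h1]
            have hsub := sub_one_mul_add s hs (g s (M + 1) 0 n (Q + 1))
            linarith [h1', hsub]
        | P + 1, hPM, 0 =>
            obtain ⟨M, rfl⟩ : ∃ M', M = M' + 1 := ⟨M - 1, by omega⟩
            rw [g_c0, g_cq, g_c0, g_cq]
            have h1 := (ih (M + 1) (P + 1) (by omega)).2 0
            have h1' : s * (g s (M + 1 + 1) (P + 1) n 0
                  + g s (M + 1 + 1 + 1) (P + 1 + 1) n (0 + 1))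
                = s * (g s (M + 1 + 1) (P + 1 + 1) n 0
                  + g s (M + 1 + 1) (P + 1 + 1) n (0 + 1)) := by
              rw [h1]
            have h2 := (ih M P (by omega)).1
            linarith [h1', h2]
        | P + 1, hPM, Q + 1 =>
            obtain ⟨M, rfl⟩ : ∃ M', M = M' + 1 := ⟨M - 1, by omega⟩
            rw [g_cq, g_cq, g_cq, g_cq]
            have h1 := (ih (M + 1) (P + 1) (by omega)).2 (Q + 1)
            have h1' : s * (g s (M + 1 + 1) (P + 1) n (Q + 1)
                  + g s (M + 1 + 1 + 1) (P + 1 + 1) n (Q + 1 + 1))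
                = s * (g s (M + 1 + 1) (P + 1 + 1) n (Q + 1)
                  + g s (M + 1 + 1) (P + 1 + 1) n (Q + 1 + 1)) := by rw [h1]
            have h2 := (ih M P (by omega)).2 Q
            linarith [h1', h2]

/-- The finset of all words of length `n`. -/
def words (s : ℕ) : ℕ → Finset (List (Letter s))
  | 0 => {[]}
  | n + 1 => ((Finset.univ : Finset (Letter s)) ×ˢ words s n).map
      ⟨fun p => p.1 :: p.2, by rintro ⟨a, u⟩ ⟨b, v⟩ h; simpa using h⟩

theorem mem_words {n : ℕ} {w : List (Letter s)} : w ∈ words s n ↔ w.length = n := by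
  induction n generalizing w with
  | zero => simp [words, List.length_eq_zero_iff]
  | succ n ih =>
      cases w with
      | nil => simp [words]
      | cons y w =>
          simp [words, ih]
          constructor
          · rintro ⟨a, b, hb, h⟩
            have h' : b = w := congrArg List.tail h
            rw [← h']; exact hb
          · intro h; exact ⟨y, w, h, rfl⟩

def cnt (s : ℕ) (u : List (Letter s)) (n q : ℕ) : ℕ :=
  ((words s n).filter (fun w => w.count (none : Letter s) = q ∧ wleB u w = true)).card

theorem cnt_succ (u : List (Letter s)) (n q : ℕ) :
    cnt s u (n + 1) q = ∑ y : Letter s,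
      ((words s n).filter
        (fun w => (y :: w).count (none : Letter s) = q ∧ wleB u (y :: w) = true)).card := by
  unfold cnt
  show (Finset.filter _ (words s (n+1))).card = _
  rw [words, Finset.filter_map, Finset.card_map, Finset.card_filter, Finset.sum_product]
  simp only [Finset.card_filter]
  rfl

theorem sum_fin_ite (i : Fin s) (A B : ℕ) :
    (∑ j : Fin s, if j = i then A else B) = A + (s - 1) * B := by
  rw [Finset.sum_eq_add_sum_sdiff_singleton_of_mem (Finset.mem_univ i)]
  simp only [if_pos rfl]
  congr 1
  rw [Finset.sum_congr rfl (fun j hj => if_neg (by simpa using (Finset.mem_sdiff.mp hj).2)),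
    Finset.sum_const, smul_eq_mul, Finset.card_sdiff_of_subset (by simp), Finset.card_univ]
  simp

theorem cnt_nil_0 (n : ℕ) : cnt s [] (n + 1) 0 = s * cnt s [] n 0 := by
  rw [cnt_succ, Fintype.sum_option]
  simp [wleB_nil, List.count_cons, cnt, Finset.card_univ]

theorem cnt_nil_q (n q : ℕ) :
    cnt s [] (n + 1) (q + 1) = cnt s [] n q + s * cnt s [] n (q + 1) := by
  rw [cnt_succ, Fintype.sum_option]
  simp [wleB_nil, List.count_cons, cnt, Finset.card_univ]

theorem cnt_none_0 (u : List (Letter s)) (n : ℕ) :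
    cnt s (none :: u) (n + 1) 0 = s * cnt s (none :: u) n 0 := by
  rw [cnt_succ, Fintype.sum_option]
  simp [wleB_cons_cons, List.count_cons, cnt, Finset.card_univ]

theorem cnt_none_q (u : List (Letter s)) (n q : ℕ) :
    cnt s (none :: u) (n + 1) (q + 1)
      = cnt s u n q + s * cnt s (none :: u) n (q + 1) := by
  rw [cnt_succ, Fintype.sum_option]
  simp [wleB_cons_cons, List.count_cons, cnt, Finset.card_univ]

theorem cnt_some_0 (i : Fin s) (u : List (Letter s)) (n : ℕ) :
    cnt s (some i :: u) (n + 1) 0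
      = cnt s u n 0 + (s - 1) * cnt s (some i :: u) n 0 := by
  rw [cnt_succ, Fintype.sum_option]
  have h : ∀ j : Fin s,
      ((words s n).filter (fun w => (some j :: w).count (none : Letter s) = 0 ∧
        wleB (some i :: u) (some j :: w) = true)).card
      = if j = i then cnt s u n 0 else cnt s (some i :: u) n 0 := by
    intro j
    rcases eq_or_ne j i with rfl | hji
    · rw [if_pos rfl]; simp [wleB_cons_cons, List.count_cons, cnt]
    · rw [if_neg hji]; simp [wleB_cons_cons, List.count_cons, cnt, hji.symm]
  rw [Finset.sum_congr rfl (fun j _ => h j), sum_fin_ite]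
  simp [List.count_cons]

theorem cnt_some_q (i : Fin s) (u : List (Letter s)) (n q : ℕ) :
    cnt s (some i :: u) (n + 1) (q + 1)
      = cnt s u n q + cnt s u n (q + 1) + (s - 1) * cnt s (some i :: u) n (q + 1) := by
  rw [cnt_succ, Fintype.sum_option]
  have h : ∀ j : Fin s,
      ((words s n).filter (fun w => (some j :: w).count (none : Letter s) = q + 1 ∧
        wleB (some i :: u) (some j :: w) = true)).card
      = if j = i then cnt s u n (q + 1) else cnt s (some i :: u) n (q + 1) := by
    intro j
    rcases eq_or_ne j i with rfl | hji
    · rw [if_pos rfl]; simp [wleB_cons_cons, List.count_cons, cnt]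
    · rw [if_neg hji]; simp [wleB_cons_cons, List.count_cons, cnt, hji.symm]
  rw [Finset.sum_congr rfl (fun j _ => h j), sum_fin_ite]
  have h0 : ((words s n).filter (fun w => (none :: w).count (none : Letter s) = q + 1 ∧
        wleB (some i :: u) (none :: w) = true)).card = cnt s u n q := by
    simp [wleB_cons_cons, List.count_cons, cnt]
  rw [h0]
  ring

theorem cnt_eq_g (hs : 1 ≤ s) : ∀ (n : ℕ) (u : List (Letter s)) (q : ℕ),
    cnt s u n q = g s u.length (u.count (none : Letter s)) n q := by
  intro n
  induction n with
  | zero =>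
      intro u q
      have h : cnt s u 0 q
          = if ([] : List (Letter s)).count (none : Letter s) = q ∧ wleB u [] = true
            then 1 else 0 := by
        simp only [cnt, words, Finset.filter_singleton]
        split_ifs <;> rfl
      rw [h]
      cases u with
      | nil =>
          cases q with
          | zero => simp [wleB_nil, g]
          | succ q => simp [wleB_nil, g]
      | cons x u =>
          cases q <;> simp [wleB_cons_nil, g_zero_succ, g]
  | succ n ih =>
      intro u q
      cases u with
      | nil =>
          cases q with
          | zero => rw [cnt_nil_0, ih]; simp [g_nil0]
          | succ q =>
              rw [cnt_nil_q, ih, ih]; simp [g_nilq]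
      | cons x u =>
          have hl : (x :: u).length = u.length + 1 := rfl
          cases x with
          | none =>
              have hc : (none :: u).count (none : Letter s)
                  = u.count (none : Letter s) + 1 := by simp [List.count_cons]
              cases q with
              | zero =>
                  rw [cnt_none_0, ih, hl, hc, g_c0, ← hc, ← hl]
              | succ q =>
                  rw [cnt_none_q, ih, ih, hl, hc, g_cq, ← hc, ← hl]
          | some i =>
              have hc : (some i :: u).count (none : Letter s)
                  = u.count (none : Letter s) := by simp [List.count_cons]
              cases hP : u.count (none : Letter s) with
              | zero =>
                  cases q with
                  | zero =>
                      rw [cnt_some_0, ih, ih, hl, hc, hP, g_a0, ← hP, ← hc]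
                  | succ q =>
                      rw [cnt_some_q, ih, ih, ih, hl, hc, hP, g_aq, ← hP, ← hc]
              | succ P =>
                  have hPm : P + 1 ≤ u.length := by
                    rw [← hP]; exact List.count_le_length
                  obtain ⟨M, hM⟩ : ∃ M, u.length = M + 1 := ⟨u.length - 1, by omega⟩
                  have hPM : P ≤ M := by omega
                  cases q with
                  | zero =>
                      rw [cnt_some_0, ih, ih, hl, hc, hP, hM, g_c0]
                      have hE0 := (gstar s hs n M P hPM).1
                      have hsub := sub_one_mul_add s hs (g s (M + 1 + 1) (P + 1) n 0)
                      linarith [hE0, hsub]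
                  | succ q =>
                      rw [cnt_some_q, ih, ih, ih, hl, hc, hP, hM, g_cq]
                      have hE1 := (gstar s hs n M P hPM).2 q
                      have hsub := sub_one_mul_add s hs (g s (M + 1 + 1) (P + 1) n (q + 1))
                      linarith [hE1, hsub]

theorem set_eq_filter (u : List (Letter s)) (n q : ℕ) :
    {w : List (Letter s) | w.length = n ∧ w.count (none : Letter s) = q ∧ WLE u w}
      = ↑((words s n).filter
          (fun w => w.count (none : Letter s) = q ∧ wleB u w = true)) := by
  ext w
  simp only [Set.mem_setOf_eq, Finset.coe_filter, Set.mem_setOf_eq, mem_words,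
    wle_iff_wleB]

end CAWD

/-- The number of words of length `n` with exactly `q` letters `c` lying above a fixed
word of length `m` with exactly `p` letters `c` depends only on `(m, p, n, q)`. -/
theorem count_above_well_defined (s : ℕ) (hs : 1 ≤ s) (m p n q : ℕ)
    (hpm : p ≤ m) (hqn : q ≤ n)
    (u u' : List (Letter s)) (hu : u.length = m) (hu' : u'.length = m)
    (hcu : u.count (none : Letter s) = p) (hcu' : u'.count (none : Letter s) = p) :
    {w : List (Letter s) | w.length = n ∧ w.count (none : Letter s) = q ∧ WLE u w}.ncard =
      {w : List (Letter s) | w.length = n ∧ w.count (none : Letter s) = q ∧ WLE u' w}.ncard := by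
  rw [CAWD.set_eq_filter, CAWD.set_eq_filter, Set.ncard_coe_finset, Set.ncard_coe_finset]
  have h1 := CAWD.cnt_eq_g hs n u q
  have h2 := CAWD.cnt_eq_g hs n u' q
  unfold CAWD.cnt at h1 h2
  rw [h1, h2, hu, hu', hcu, hcu']
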